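/- For each k ≥ 1, the class of finite-dimensional solvable Lie algebras of nilpotent length at most k is saturated: if L is a finite-dimensional solvable Lie algebra with n(L/φ(L)) ≤ k, then n(L) ≤ k. -/

import Mathlib

/-- The canonical quotient map `L → L ⧸ I` as a morphism of Lie algebras. -/
def lieQuotMk {F L : Type*} [Field F] [LieRing L] [LieAlgebra F L] (I : LieIdeal F L) :
    L →ₗ⁅F⁆ L ⧸ I where
  toLinearMap := (LieSubmodule.Quotient.mk' I).toLinearMap
  map_lie' := rfl

variable (F : Type*) [Field F]

/-- The nilradical: the largest nilpotent ideal of a (finite-dimensional) Lie algebra. -/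
noncomputable def nilrad (L : Type*) [LieRing L] [LieAlgebra F L] : LieIdeal F L :=
  sSup {I : LieIdeal F L | LieRing.IsNilpotent I}

/-- The upper nilpotent series: `N 0 = 0`, `N (i+1) / N i = nilradical of L ⧸ N i`. -/
noncomputable def upperNil (L : Type*) [LieRing L] [LieAlgebra F L] : ℕ → LieIdeal F L
  | 0 => ⊥
  | n + 1 => LieIdeal.comap (lieQuotMk (upperNil L n)) (nilrad F (L ⧸ upperNil L n))

/-- The nilpotent length: the least `n` with `N n = L`. -/
noncomputable def nilLen (L : Type*) [LieRing L] [LieAlgebra F L] : ℕ :=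
  sInf {n : ℕ | upperNil F L n = ⊤}

/-- The nilpotent residual `γ∞(L)`: the smallest ideal with nilpotent quotient. -/
noncomputable def nilResidual (L : Type*) [LieRing L] [LieAlgebra F L] : LieIdeal F L :=
  sInf {I : LieIdeal F L | LieRing.IsNilpotent (L ⧸ I)}

/-- The lower nilpotent series: `Γ 0 = L`, `Γ (i+1) = γ∞(Γ i)`, viewed as subalgebras of `L`. -/
noncomputable def lowerNil (L : Type*) [LieRing L] [LieAlgebra F L] : ℕ → LieSubalgebra F L
  | 0 => ⊤
  | n + 1 =>
      LieSubalgebra.map (lowerNil L n).incl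
        (LieIdeal.toLieSubalgebra F (lowerNil L n) (nilResidual F (lowerNil L n)))

/-- `M` is a maximal (proper) subalgebra of `L`. -/
def IsMaxSub {L : Type*} [LieRing L] [LieAlgebra F L] (M : LieSubalgebra F L) : Prop :=
  M ≠ ⊤ ∧ ∀ K : LieSubalgebra F L, M < K → K = ⊤

/-- The Frattini subalgebra: the intersection of all maximal subalgebras. -/
noncomputable def lieFrattini (L : Type*) [LieRing L] [LieAlgebra F L] : LieSubalgebra F L :=
  sInf {M : LieSubalgebra F L | IsMaxSub F M}

/-- The core of a subalgebra `U`: the largest ideal of `L` contained in `U`. -/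
noncomputable def lieCore {L : Type*} [LieRing L] [LieAlgebra F L] (U : LieSubalgebra F L) :
    LieIdeal F L :=
  sSup {I : LieIdeal F L | (I : Set L) ⊆ (U : Set L)}

/-- `A` is a minimal ideal of `L`. -/
def IsMinIdeal {L : Type*} [LieRing L] [LieAlgebra F L] (A : LieIdeal F L) : Prop :=
  A ≠ ⊥ ∧ ∀ B : LieIdeal F L, B < A → B = ⊥

/-- The Frattini series: `φ i (L) / N (i-1) (L) = φ(L ⧸ N (i-1) (L))` for `i ≥ 1`. -/
noncomputable def fratSeries (L : Type*) [LieRing L] [LieAlgebra F L] (i : ℕ) :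
    LieSubalgebra F L :=
  LieSubalgebra.comap (lieQuotMk (upperNil F L (i - 1)))
    (lieFrattini F (L ⧸ upperNil F L (i - 1)))

/-- `L` is extreme: `N i (L) / φ i (L)` is a chief factor of `L` for each `1 ≤ i ≤ n(L)`. -/
def IsExtremeLie (L : Type*) [LieRing L] [LieAlgebra F L] : Prop :=
  ∀ i, 1 ≤ i → i ≤ nilLen F L →
    (fratSeries F L i : Set L) ⊆ (upperNil F L i : Set L) ∧
    (fratSeries F L i : Set L) ≠ (upperNil F L i : Set L) ∧
    ∀ C : LieIdeal F L, (fratSeries F L i : Set L) ⊆ (C : Set L) → C ≤ upperNil F L i →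
      (C : Set L) = (fratSeries F L i : Set L) ∨ C = upperNil F L i

/-- `L` is supersolvable: it has a chain of ideals with one-dimensional quotients. -/
def IsSupersolvable (L : Type*) [LieRing L] [LieAlgebra F L] : Prop :=
  ∃ (n : ℕ) (C : ℕ → LieIdeal F L), C 0 = ⊥ ∧ C n = ⊤ ∧
    ∀ i < n, C i ≤ C (i + 1) ∧
      Module.finrank F (C (i + 1)) = Module.finrank F (C i) + 1

/-- A minimal ideal `A` is complemented if some maximal subalgebra `M` satisfies
`L = A + M` and `A ∩ M = 0`. -/
def IsComplementedIdeal {L : Type*} [LieRing L] [LieAlgebra F L] (A : LieIdeal F L) : Prop :=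
  ∃ M : LieSubalgebra F L, IsMaxSub F M ∧
    A.toSubmodule ⊔ M.toSubmodule = ⊤ ∧ A.toSubmodule ⊓ M.toSubmodule = ⊥

section ProofAux

open LieAlgebra

variable {L : Type*} [LieRing L] [LieAlgebra F L]

@[simp] private lemma lieQuotMk_apply {F : Type*} [Field F] {L : Type*} [LieRing L]
    [LieAlgebra F L] (I : LieIdeal F L) (x : L) :
    lieQuotMk I x = LieSubmodule.Quotient.mk (N := I) x := rfl

private lemma lieQuotMk_surjective {F : Type*} [Field F] {L : Type*} [LieRing L]
    [LieAlgebra F L] (I : LieIdeal F L) : Function.Surjective (lieQuotMk I) :=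
  fun y => Quotient.inductionOn' y fun a => ⟨a, rfl⟩

private lemma lieQuotMk_eq_zero {F : Type*} [Field F] {L : Type*} [LieRing L]
    [LieAlgebra F L] {I : LieIdeal F L} {x : L} : lieQuotMk I x = 0 ↔ x ∈ I :=
  LieSubmodule.Quotient.mk_eq_zero'

private noncomputable def lieQuotLift {F : Type*} [Field F] {L : Type*} [LieRing L]
    [LieAlgebra F L] {L' : Type*} [LieRing L'] [LieAlgebra F L']
    (J : LieIdeal F L) (f : L →ₗ⁅F⁆ L') (h : ∀ x ∈ J, f x = 0) : (L ⧸ J) →ₗ⁅F⁆ L' where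
  toLinearMap := Submodule.liftQ J.toSubmodule f.toLinearMap h
  map_lie' := by
    intro x y
    obtain ⟨a, rfl⟩ := lieQuotMk_surjective J x
    obtain ⟨b, rfl⟩ := lieQuotMk_surjective J y
    show Submodule.liftQ J.toSubmodule f.toLinearMap h ⁅lieQuotMk J a, lieQuotMk J b⁆ =
      ⁅Submodule.liftQ J.toSubmodule f.toLinearMap h (lieQuotMk J a),
        Submodule.liftQ J.toSubmodule f.toLinearMap h (lieQuotMk J b)⁆
    rw [show ⁅lieQuotMk J a, lieQuotMk J b⁆ = lieQuotMk J ⁅a, b⁆ from rfl]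
    show f ⁅a, b⁆ = ⁅f a, f b⁆
    exact f.map_lie a b

private lemma lieQuotLift_comm {F : Type*} [Field F] {L : Type*} [LieRing L]
    [LieAlgebra F L] {L' : Type*} [LieRing L'] [LieAlgebra F L']
    (J : LieIdeal F L) (f : L →ₗ⁅F⁆ L') (h : ∀ x ∈ J, f x = 0) (x : L) :
    lieQuotLift J f h (lieQuotMk J x) = f x := rfl

private theorem frattini_nongen {F : Type*} [Field F] {L : Type*} [LieRing L]
    [LieAlgebra F L] [FiniteDimensional F L] (I : LieIdeal F L)
    (hI : (I : Set L) = (lieFrattini F L : Set L)) (H : LieSubalgebra F L)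
    (hH : ∀ x : L, ∃ h ∈ H, x - h ∈ I) : H = ⊤ := by
  by_contra hne
  obtain ⟨K, hK, hmin⟩ := (LieSubalgebra.wellFoundedGT_of_noetherian F L).wf.has_min
    {K : LieSubalgebra F L | H ≤ K ∧ K ≠ ⊤} ⟨H, le_rfl, hne⟩
  have hKmax : IsMaxSub F K := by
    refine ⟨hK.2, fun K' hlt => ?_⟩
    by_contra hK'
    exact hmin K' ⟨hK.1.trans hlt.le, hK'⟩ hlt
  have hfr : lieFrattini F L ≤ K := sInf_le hKmax
  apply hK.2
  rw [eq_top_iff]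
  intro x _
  obtain ⟨h, hh, hxh⟩ := hH x
  have h1 : x - h ∈ K := hfr (by rw [← SetLike.mem_coe, ← hI] at *; exact hxh)
  have := K.add_mem (hK.1 hh) h1
  simpa using this

private theorem barnes_ad_nilpotent {F : Type*} [Field F] {L : Type*} [LieRing L]
    [LieAlgebra F L] [FiniteDimensional F L] (I : LieIdeal F L)
    (hI : (I : Set L) = (lieFrattini F L : Set L))
    {L₂ : Type*} [LieRing L₂] [LieAlgebra F L₂] (ν : L →ₗ⁅F⁆ L₂)
    (hker : ∀ y : L, ν y = 0 → y ∈ I) (K : LieIdeal F L₂)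
    (hK : LieRing.IsNilpotent K) {x : L} (hx : ν x ∈ K) :
    _root_.IsNilpotent (ad F L x) := by
  haveI := hK
  obtain ⟨m, hm⟩ := LieAlgebra.nilpotent_ad_of_nilpotent_algebra F ↥K
  set f : Module.End F L := ad F L x with hf
  have key : ∀ (n : ℕ) (y : L) (hy : ν y ∈ K),
      ν ((f ^ n) y) = (((ad F K ⟨ν x, hx⟩ : Module.End F K) ^ n) ⟨ν y, hy⟩ : L₂) := by
    intro n
    induction n with
    | zero => intro y hy; simp
    | succ n ih =>
      intro y hy
      have hy' : ν ⁅x, y⁆ ∈ K := by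
        rw [LieHom.map_lie]
        exact lie_mem_left F L₂ K _ _ hx
      have h3 : (ad F K ⟨ν x, hx⟩) ⟨ν y, hy⟩ = ⟨ν ⁅x, y⁆, hy'⟩ := by
        apply Subtype.ext
        show ((⁅(⟨ν x, hx⟩ : K), (⟨ν y, hy⟩ : K)⁆ : K) : L₂) = ν ⁅x, y⁆
        rw [LieHom.map_lie]
        rfl
      calc ν ((f ^ (n + 1)) y) = ν ((f ^ n) (f y)) := by rw [pow_succ, Module.End.mul_apply]
        _ = ν ((f ^ n) ⁅x, y⁆) := rfl
        _ = (((ad F K ⟨ν x, hx⟩ : Module.End F K) ^ n) ⟨ν ⁅x, y⁆, hy'⟩ : L₂) := ih _ hy'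
        _ = (((ad F K ⟨ν x, hx⟩ : Module.End F K) ^ (n + 1)) ⟨ν y, hy⟩ : L₂) := by
            rw [pow_succ, Module.End.mul_apply, h3]
  have hIm : ∀ y : L, (f ^ (m + 1)) y ∈ I := by
    intro y
    have h1 : ν (f y) ∈ K := by
      show ν ⁅x, y⁆ ∈ K
      rw [LieHom.map_lie]
      exact lie_mem_left F L₂ K _ _ hx
    apply hker
    have h2 : (f ^ (m + 1)) y = (f ^ m) (f y) := by rw [pow_succ, Module.End.mul_apply]
    rw [h2, key m (f y) h1, hm ⟨ν x, hx⟩]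
    simp
  obtain ⟨n0, hn0⟩ := Filter.eventually_atTop.mp f.eventually_codisjoint_ker_pow_range_pow
  set n := max n0 (m + 1) with hn
  have hsup : LinearMap.ker (f ^ n) ⊔ LinearMap.range (f ^ n) = ⊤ :=
    codisjoint_iff.mp (hn0 n (le_max_left _ _))
  have hE : LieSubalgebra.engel F x = ⊤ := by
    apply frattini_nongen I hI
    intro z
    have hz : z ∈ LinearMap.ker (f ^ n) ⊔ LinearMap.range (f ^ n) := by rw [hsup]; trivial
    obtain ⟨u, hu, v, hv, rfl⟩ := Submodule.mem_sup.mp hz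
    refine ⟨u, ?_, ?_⟩
    · rw [LieSubalgebra.mem_engel_iff]
      exact ⟨n, hu⟩
    · obtain ⟨w, rfl⟩ := hv
      have h4 : u + (f ^ n) w - u = (f ^ n) w := by abel
      rw [h4]
      have h5 : (f ^ n) w = (f ^ (m + 1)) ((f ^ (n - (m + 1))) w) := by
        rw [← Module.End.mul_apply, ← pow_add]
        congr 2
        omega
      rw [h5]
      exact hIm _
  obtain ⟨N, hN⟩ := (monotone_stabilizes_iff_noetherian.mpr inferInstance) f.iterateKer
  refine ⟨N, ?_⟩
  ext y
  have hy : y ∈ LieSubalgebra.engel F x := by rw [hE]; trivial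
  rw [LieSubalgebra.mem_engel_iff] at hy
  obtain ⟨j, hj⟩ := hy
  have h6 : y ∈ f.iterateKer (max N j) := f.iterateKer.monotone (le_max_right N j) hj
  rw [← hN (max N j) (le_max_left N j)] at h6
  simpa using h6

private theorem barnes_comap_nilpotent {F : Type*} [Field F] {L : Type*} [LieRing L]
    [LieAlgebra F L] [FiniteDimensional F L] (I : LieIdeal F L)
    (hI : (I : Set L) = (lieFrattini F L : Set L))
    {L₂ : Type*} [LieRing L₂] [LieAlgebra F L₂] (ν : L →ₗ⁅F⁆ L₂)
    (hker : ∀ y : L, ν y = 0 → y ∈ I) (K : LieIdeal F L₂)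
    (hK : LieRing.IsNilpotent K) :
    LieRing.IsNilpotent (LieIdeal.comap ν K) := by
  set J := LieIdeal.comap ν K with hJdef
  rw [LieAlgebra.isNilpotent_iff_forall (R := F)]
  intro z
  obtain ⟨t, ht⟩ := barnes_ad_nilpotent I hI ν hker K hK
    (show ν ↑z ∈ K from LieIdeal.mem_comap.mp z.2)
  have coe_pow : ∀ (s : ℕ) (w : J), (((LieAlgebra.ad F J z ^ s) w : J) : L) =
      ((LieAlgebra.ad F L ↑z) ^ s) (↑w : L) := by
    intro s
    induction s with
    | zero => intro w; rfl
    | succ s ih =>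
      intro w
      rw [pow_succ', Module.End.mul_apply, pow_succ', Module.End.mul_apply, ← ih]
      rfl
  refine ⟨t, ?_⟩
  ext w
  have h0 := coe_pow t w
  rw [ht] at h0
  simp only [LinearMap.zero_apply] at h0 ⊢
  rw [h0]
  simp

private theorem map_nilpotent {F : Type*} [Field F] {L : Type*} [LieRing L]
    [LieAlgebra F L] {L₂ : Type*} [LieRing L₂] [LieAlgebra F L₂]
    (ρ : L →ₗ⁅F⁆ L₂) (hρ : Function.Surjective ρ) (K : LieIdeal F L)
    (hK : LieRing.IsNilpotent K) :
    LieRing.IsNilpotent (LieIdeal.map ρ K) := by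
  haveI := hK
  let g : K →ₗ⁅F⁆ LieIdeal.map ρ K :=
    { toFun := fun z => ⟨ρ ↑z, LieIdeal.mem_map z.2⟩
      map_add' := by intro a b; apply Subtype.ext; simp
      map_smul' := by intro a b; apply Subtype.ext; simp
      map_lie' := by
        intro a b
        apply Subtype.ext
        show ρ ⁅(↑a : L), ↑b⁆ = ⁅ρ ↑a, ρ ↑b⁆
        exact ρ.map_lie _ _ }
  have hg : Function.Surjective g := by
    intro w
    obtain ⟨z, hz⟩ := LieIdeal.mem_map_of_surjective hρ w.2
    exact ⟨z, Subtype.ext hz⟩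
  exact hg.lieAlgebra_isNilpotent

private theorem bot_isNilpotent {F : Type*} [Field F] {L : Type*} [LieRing L]
    [LieAlgebra F L] : LieRing.IsNilpotent ((⊥ : LieIdeal F L)) := by
  rw [LieRing.IsNilpotent, LieModule.isNilpotent_iff F]
  refine ⟨0, ?_⟩
  rw [eq_bot_iff]
  rintro ⟨z, hz⟩ -
  have hz0 : z = 0 := by simpa using hz
  rw [LieSubmodule.mem_bot]
  exact Subtype.ext hz0

private theorem push_nilrad {F : Type*} [Field F] {L : Type*} [LieRing L] [LieAlgebra F L]
    {L₂ : Type*} [LieRing L₂] [LieAlgebra F L₂]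
    (ν : L →ₗ⁅F⁆ L₂) (hsurj : Function.Surjective ν) (C : LieIdeal F L)
    (hyp : ∀ K : LieIdeal F L₂, LieRing.IsNilpotent K → ∀ y : L, ν y ∈ K →
      lieQuotMk C y ∈ nilrad F (L ⧸ C))
    (x : L) (hx : ν x ∈ nilrad F L₂) : lieQuotMk C x ∈ nilrad F (L ⧸ C) := by
  have hxs : ν x ∈ ⨆ K : {J : LieIdeal F L₂ | LieRing.IsNilpotent J}, (K : LieIdeal F L₂) := by
    rw [← sSup_eq_iSup']
    exact hx
  rw [← LieSubmodule.mem_toSubmodule, LieSubmodule.iSup_toSubmodule] at hxs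
  have main : ∀ z : L₂,
      z ∈ (⨆ K : {J : LieIdeal F L₂ | LieRing.IsNilpotent J},
        ((K : LieIdeal F L₂) : Submodule F L₂)) →
      ∀ y : L, ν y = z → lieQuotMk C y ∈ nilrad F (L ⧸ C) := by
    intro z hz
    refine Submodule.iSup_induction _ (motive := fun z => ∀ y : L, ν y = z →
      lieQuotMk C y ∈ nilrad F (L ⧸ C)) hz ?_ ?_ ?_
    · rintro ⟨K, hK⟩ w hw y hy
      exact hyp K hK y (by rw [hy]; exact hw)
    · intro y hy
      refine hyp ⊥ bot_isNilpotent y ?_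
      rw [LieSubmodule.mem_bot]
      exact hy
    · intro z₁ z₂ h₁ h₂ y hy
      obtain ⟨y₁, rfl⟩ := hsurj z₁
      have h₂' := h₂ (y - y₁) (by rw [map_sub, hy]; abel)
      have h₁' := h₁ y₁ rfl
      have hadd := (nilrad F (L ⧸ C)).add_mem h₁' h₂'
      have heq : lieQuotMk C y₁ + lieQuotMk C (y - y₁) = lieQuotMk C y := by
        rw [← map_add]
        congr 1
        abel
      rw [← heq]
      exact hadd
  exact main (ν x) hxs x rfl

private theorem upperNil_succ_def {F : Type*} [Field F] (L : Type*) [LieRing L]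
    [LieAlgebra F L] (n : ℕ) :
    upperNil F L (n + 1) =
      LieIdeal.comap (lieQuotMk (upperNil F L n)) (nilrad F (L ⧸ upperNil F L n)) := rfl

private theorem upperNil_zero_def {F : Type*} [Field F] (L : Type*) [LieRing L]
    [LieAlgebra F L] : upperNil F L 0 = ⊥ := rfl

end ProofAux

/-- The class of solvable Lie algebras of nilpotent length `≤ k` is saturated:
if `n(L ⧸ φ(L)) ≤ k` then `n(L) ≤ k`. -/
theorem stmt12 {F L : Type*} [Field F] [LieRing L] [LieAlgebra F L]
    [FiniteDimensional F L] [LieAlgebra.IsSolvable L]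
    (k : ℕ) (hk : 1 ≤ k) (I : LieIdeal F L) (hI : (I : Set L) = (lieFrattini F L : Set L))
    (h : upperNil F (L ⧸ I) k = ⊤) :
    upperNil F L k = ⊤ := by
  set π := lieQuotMk I with hπ
  have main : ∀ i : ℕ, ∀ x : L, π x ∈ upperNil F (L ⧸ I) (i + 1) → x ∈ upperNil F L (i + 1) := by
    intro i
    induction i with
    | zero =>
      intro x hx
      rw [upperNil_succ_def, LieIdeal.mem_comap] at hx ⊢
      set ν := (lieQuotMk (upperNil F (L ⧸ I) 0)).comp π with hν
      have hsurj : Function.Surjective ν :=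
        (lieQuotMk_surjective _).comp (lieQuotMk_surjective I)
      have hker : ∀ y : L, ν y = 0 → y ∈ I := by
        intro y hy
        have h1 : π y ∈ upperNil F (L ⧸ I) 0 := lieQuotMk_eq_zero.mp hy
        rw [upperNil_zero_def, LieSubmodule.mem_bot] at h1
        exact lieQuotMk_eq_zero.mp h1
      refine push_nilrad ν hsurj (upperNil F L 0) ?_ x hx
      intro K hK y hy
      have hJ : LieRing.IsNilpotent (LieIdeal.comap ν K) :=
        barnes_comap_nilpotent I hI ν hker K hK
      have hmapn := map_nilpotent (lieQuotMk (upperNil F L 0)) (lieQuotMk_surjective _) _ hJ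
      have hmem : lieQuotMk (upperNil F L 0) y ∈
          LieIdeal.map (lieQuotMk (upperNil F L 0)) (LieIdeal.comap ν K) :=
        LieIdeal.mem_map (LieIdeal.mem_comap.mpr hy)
      have hle : LieIdeal.map (lieQuotMk (upperNil F L 0)) (LieIdeal.comap ν K) ≤
          nilrad F (L ⧸ upperNil F L 0) := le_sSup hmapn
      exact hle hmem
    | succ i ih =>
      intro x hx
      rw [upperNil_succ_def, LieIdeal.mem_comap] at hx ⊢
      set ν := (lieQuotMk (upperNil F (L ⧸ I) (i + 1))).comp π with hν
      have hsurj : Function.Surjective ν :=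
        (lieQuotMk_surjective _).comp (lieQuotMk_surjective I)
      refine push_nilrad ν hsurj (upperNil F L (i + 1)) ?_ x hx
      intro K hK y hy
      have hIC : ∀ z ∈ I, lieQuotMk (upperNil F L (i + 1)) z = 0 := by
        intro z hz
        rw [lieQuotMk_eq_zero]
        refine ih z ?_
        have : π z = 0 := lieQuotMk_eq_zero.mpr hz
        rw [this]
        exact zero_mem _
      have hg : ∀ z ∈ upperNil F (L ⧸ I) (i + 1),
          lieQuotLift I (lieQuotMk (upperNil F L (i + 1))) hIC z = 0 := by
        intro z hz
        obtain ⟨w, rfl⟩ := lieQuotMk_surjective I z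
        rw [lieQuotLift_comm, lieQuotMk_eq_zero]
        exact ih w hz
      set ρ := lieQuotLift (upperNil F (L ⧸ I) (i + 1))
        (lieQuotLift I (lieQuotMk (upperNil F L (i + 1))) hIC) hg with hρ
      have hρν : ∀ w : L, ρ (ν w) = lieQuotMk (upperNil F L (i + 1)) w := fun w => rfl
      have hρs : Function.Surjective ρ := by
        intro w
        obtain ⟨a, rfl⟩ := lieQuotMk_surjective (upperNil F L (i + 1)) w
        exact ⟨ν a, hρν a⟩
      have hmapn := map_nilpotent ρ hρs K hK
      have hmem : lieQuotMk (upperNil F L (i + 1)) y ∈ LieIdeal.map ρ K := by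
        rw [← hρν y]
        exact LieIdeal.mem_map hy
      have hle : LieIdeal.map ρ K ≤ nilrad F (L ⧸ upperNil F L (i + 1)) := le_sSup hmapn
      exact hle hmem
  obtain ⟨k', rfl⟩ : ∃ k', k = k' + 1 := ⟨k - 1, by omega⟩
  rw [eq_top_iff]
  intro x _
  refine main k' x ?_
  rw [h]
  trivial
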